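/- The set of supersymmetric states is a face of the state space: if φ is supersymmetric with respect to a symmetric superderivation δ_s and φ = Σᵢ λᵢφᵢ is a finite convex combination of states (λᵢ > 0, Σλᵢ = 1), then each φᵢ is supersymmetric with respect to δ_s. -/

import Mathlib

open scoped ComplexOrder

/-- The linear map `a ↦ π a Ω` from the algebra into the Hilbert space. -/
noncomputable def gnsVec {F H : Type*} [NormedRing F] [StarRing F] [NormedAlgebra ℂ F]
    [NormedAddCommGroup H] [InnerProductSpace ℂ H] [CompleteSpace H]
    (π : F →⋆ₐ[ℂ] (H →L[ℂ] H)) (Ω : H) : F →ₗ[ℂ] H where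
  toFun a := π a Ω
  map_add' a b := by simp
  map_smul' c a := by simp

/-- The set of supersymmetric states is a face of the state space:
if `φ` is supersymmetric with respect to a symmetric superderivation `δ_s` and
`φ = Σᵢ λᵢ φᵢ` is a finite convex combination of states (`λᵢ > 0`, `Σ λᵢ = 1`),
then each `φᵢ` is supersymmetric with respect to `δ_s`.
(The hypotheses record the facts available in the GNS representation of `φ`:
the supercharge `Q_s` is self-adjoint with `Q_s Ω = 0`, the Hamiltonian
`H = Q_s²` is affiliated to `π(F)''`, and each component state is given by a
projection in the commutant.) -/
theorem supersymmetric_states_form_face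
    {F : Type*} [NormedRing F] [StarRing F] [CStarRing F] [NormedAlgebra ℂ F]
    [StarModule ℂ F] [CompleteSpace F]
    {H : Type*} [NormedAddCommGroup H] [InnerProductSpace ℂ H] [CompleteSpace H]
    (γ : F ≃⋆ₐ[ℂ] F) (hγ : ∀ x, γ (γ x) = x)
    (A₀ : StarSubalgebra ℂ F) (hA₀ : ∀ a ∈ A₀, γ a ∈ A₀)
    (δs : F →ₗ[ℂ] F)
    (hodd : ∀ a ∈ A₀, δs (γ a) = - γ (δs a))
    (hleib : ∀ a ∈ A₀, ∀ b ∈ A₀, δs (a * b) = δs a * b + γ a * δs b)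
    (hsym : ∀ x : F, - star (δs (γ (star x))) = δs x)
    (φ : F →ₗ[ℂ] ℂ) (hφpos : ∀ x : F, 0 ≤ φ (star x * x)) (hφ1 : φ 1 = 1)
    (hsusy : ∀ a ∈ A₀, φ (δs a) = 0)
    -- GNS representation of φ
    (π : F →⋆ₐ[ℂ] (H →L[ℂ] H)) (Ω : H)
    (hGNS : ∀ x : F, φ x = inner ℂ Ω (π x Ω))
    (hdense :
      Dense (((Subalgebra.toSubmodule A₀.toSubalgebra).map (gnsVec π Ω) : Submodule ℂ H)
        : Set H))
    -- the self-adjoint supercharge with Q_s Ω = 0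
    (Qs : H →ₗ.[ℂ] H) (hQssa : IsSelfAdjoint Qs)
    (hQsdom : ∀ a ∈ A₀, π a Ω ∈ Qs.domain)
    (hQsact : ∀ a ∈ A₀, ∀ h : π a Ω ∈ Qs.domain, Qs ⟨π a Ω, h⟩ = π (δs a) Ω)
    (hΩQ : Ω ∈ Qs.domain) (hQsΩ : ∀ h : Ω ∈ Qs.domain, Qs ⟨Ω, h⟩ = 0)
    -- the Hamiltonian H = Q_s², annihilating Ω and affiliated to π(F)''
    (Hop : H →ₗ.[ℂ] H) (hHsa : IsSelfAdjoint Hop)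
    (hΩH : Ω ∈ Hop.domain) (hHΩ : ∀ h : Ω ∈ Hop.domain, Hop ⟨Ω, h⟩ = 0)
    (hHdom : ∀ ξ : H, ξ ∈ Hop.domain ↔ ∃ h : ξ ∈ Qs.domain, Qs ⟨ξ, h⟩ ∈ Qs.domain)
    (hHQ : ∀ (ξ : H) (hξ : ξ ∈ Hop.domain) (h1 : ξ ∈ Qs.domain)
      (h2 : Qs ⟨ξ, h1⟩ ∈ Qs.domain), Hop ⟨ξ, hξ⟩ = Qs ⟨Qs ⟨ξ, h1⟩, h2⟩)
    (hHaff : ∀ p : H →L[ℂ] H, IsSelfAdjoint p → p ∘L p = p →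
      (∀ x : F, p ∘L π x = π x ∘L p) →
      (∀ (ξ : H) (hξ : ξ ∈ Hop.domain), p ξ ∈ Hop.domain) ∧
      (∀ (ξ : H) (hξ : ξ ∈ Hop.domain) (h2 : p ξ ∈ Hop.domain),
        Hop ⟨p ξ, h2⟩ = p (Hop ⟨ξ, hξ⟩)))
    -- the finite convex decomposition of φ into states φᵢ
    (n : ℕ) (lam : Fin n → ℝ) (φi : Fin n → (F →ₗ[ℂ] ℂ))
    (hlam : ∀ i, 0 < lam i) (hsum : ∑ i, lam i = 1)
    (hipos : ∀ (i) (x : F), 0 ≤ φi i (star x * x)) (hi1 : ∀ i, φi i 1 = 1)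
    (hdecomp : ∀ x : F, φ x = ∑ i, (lam i : ℂ) * φi i x)
    -- each component state is given by a projection in the commutant [BR, Th.2.3.19]
    (hcomp : ∀ i, ∃ p : H →L[ℂ] H, IsSelfAdjoint p ∧ p ∘L p = p ∧
      (∀ x : F, p ∘L π x = π x ∘L p) ∧ (inner ℂ Ω (p Ω) : ℂ) ≠ 0 ∧
      ∀ x : F, φi i x = (inner ℂ Ω (p Ω) : ℂ)⁻¹ * inner ℂ (p Ω) (π x (p Ω))) :
    ∀ i, ∀ a ∈ A₀, φi i (δs a) = 0 := by
  classical
  -- symmetry of Qs on its domain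
  have hQsym : ∀ x y : Qs.domain,
      (inner ℂ (Qs x) (y : H) : ℂ) = inner ℂ (x : H) (Qs y) := by
    have h := Qs.adjoint_isFormalAdjoint hQssa.dense_domain
    rw [LinearPMap.isSelfAdjoint_def.mp hQssa] at h
    exact fun x y => h x y
  intro i a ha
  obtain ⟨p, hpsa, hpidem, hpcomm, hc, hφieq⟩ := hcomp i
  have hadj : ContinuousLinearMap.adjoint p = p :=
    ContinuousLinearMap.isSelfAdjoint_iff'.mp hpsa
  obtain ⟨hdomH, hcommH⟩ := hHaff p hpsa hpidem hpcomm
  have hpΩH : p Ω ∈ Hop.domain := hdomH Ω hΩH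
  obtain ⟨h1, h2⟩ := (hHdom (p Ω)).mp hpΩH
  -- Hop (p Ω) = 0
  have hHpΩ : Hop ⟨p Ω, hpΩH⟩ = 0 := by
    rw [hcommH Ω hΩH hpΩH, hHΩ hΩH, map_zero]
  -- Qs (Qs (p Ω)) = 0
  have hQQ : Qs ⟨Qs ⟨p Ω, h1⟩, h2⟩ = 0 := by
    rw [← hHQ (p Ω) hpΩH h1 h2, hHpΩ]
  -- Qs (p Ω) = 0
  have hQpΩ : Qs ⟨p Ω, h1⟩ = 0 := by
    have : (inner ℂ (Qs ⟨p Ω, h1⟩) (Qs ⟨p Ω, h1⟩) : ℂ) = 0 := by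
      have h3 := hQsym ⟨p Ω, h1⟩ ⟨Qs ⟨p Ω, h1⟩, h2⟩
      rw [h3, hQQ, inner_zero_right]
    exact inner_self_eq_zero.mp this
  rw [hφieq]
  have hkey : (inner ℂ (p Ω) (π (δs a) (p Ω)) : ℂ) = 0 := by
    have e1 : π (δs a) (p Ω) = p (π (δs a) Ω) := by
      have := congrArg (fun T : H →L[ℂ] H => T Ω) (hpcomm (δs a))
      exact this.symm
    have e2 : π (δs a) Ω = Qs ⟨π a Ω, hQsdom a ha⟩ := (hQsact a ha (hQsdom a ha)).symm
    calc (inner ℂ (p Ω) (π (δs a) (p Ω)) : ℂ)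
        = inner ℂ (p Ω) (p (π (δs a) Ω)) := by rw [e1]
      _ = inner ℂ (p (p Ω)) (π (δs a) Ω) := by
          nth_rewrite 2 [← hadj]
          rw [ContinuousLinearMap.adjoint_inner_right]
      _ = inner ℂ (p Ω) (π (δs a) Ω) := by
          have : p (p Ω) = p Ω := congrArg (fun T : H →L[ℂ] H => T Ω) hpidem
          rw [this]
      _ = inner ℂ (p Ω) (Qs ⟨π a Ω, hQsdom a ha⟩) := by rw [e2]
      _ = inner ℂ ((⟨p Ω, h1⟩ : Qs.domain) : H) (Qs ⟨π a Ω, hQsdom a ha⟩) := rfl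
      _ = inner ℂ (Qs ⟨p Ω, h1⟩) ((π a Ω : H)) := (hQsym ⟨p Ω, h1⟩ ⟨π a Ω, hQsdom a ha⟩).symm
      _ = 0 := by rw [hQpΩ, inner_zero_left]
  rw [hkey, mul_zero]
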